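/- Let q be a prime power and let C be a symplectic LCD [2n,k]_q code. Then k is even and there exist a generator matrix G of C and a generator matrix H of C^{⊥s} such that the 2n×2n matrix M obtained by stacking G on top of H satisfies M Ω_n Mᵀ = diag(J₂, J₂, …, J₂) (n blocks), where J₂ = [[0,1],[−1,0]]. -/

import Mathlib

open scoped BigOperators
open Matrix

noncomputable section

/-- The symplectic inner product `⟨x,y⟩_s = ∑_{i=1}^n (x_i y_{n+i} - x_{n+i} y_i)` on `K^{2n}`. -/
def sympInner {K : Type*} [Field K] (n : ℕ) (x y : Fin (2 * n) → K) : K :=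
  ∑ i : Fin n,
    (x ⟨i.1, by have := i.2; omega⟩ * y ⟨n + i.1, by have := i.2; omega⟩ -
      x ⟨n + i.1, by have := i.2; omega⟩ * y ⟨i.1, by have := i.2; omega⟩)

/-- The symplectic dual `C^{⊥s}` of a code `C ⊆ K^{2n}`. -/
def sympDual {K : Type*} [Field K] (n : ℕ) (C : Submodule K (Fin (2 * n) → K)) :
    Submodule K (Fin (2 * n) → K) where
  carrier := {y | ∀ x ∈ C, sympInner n x y = 0}
  zero_mem' := by
    intro x hx
    simp [sympInner]
  add_mem' := by
    intro y z hy hz x hx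
    have h1 := hy x hx
    have h2 := hz x hx
    simp only [sympInner, Pi.add_apply] at h1 h2 ⊢
    calc (∑ i : Fin n, _) = (∑ i : Fin n,
          (x ⟨i.1, by have := i.2; omega⟩ * y ⟨n + i.1, by have := i.2; omega⟩ -
            x ⟨n + i.1, by have := i.2; omega⟩ * y ⟨i.1, by have := i.2; omega⟩)) +
        ∑ i : Fin n,
          (x ⟨i.1, by have := i.2; omega⟩ * z ⟨n + i.1, by have := i.2; omega⟩ -
            x ⟨n + i.1, by have := i.2; omega⟩ * z ⟨i.1, by have := i.2; omega⟩) := by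
          rw [← Finset.sum_add_distrib]
          exact Finset.sum_congr rfl fun i _ => by ring
      _ = 0 := by rw [h1, h2, add_zero]
  smul_mem' := by
    intro c y hy x hx
    have h := hy x hx
    simp only [sympInner, Pi.smul_apply, smul_eq_mul] at h ⊢
    calc (∑ i : Fin n, _) = c * ∑ i : Fin n,
          (x ⟨i.1, by have := i.2; omega⟩ * y ⟨n + i.1, by have := i.2; omega⟩ -
            x ⟨n + i.1, by have := i.2; omega⟩ * y ⟨i.1, by have := i.2; omega⟩) := by
          rw [Finset.mul_sum]
          exact Finset.sum_congr rfl fun i _ => by ring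
      _ = 0 := by rw [h, mul_zero]

/-- The matrix `Ω_n = [[O, I_n], [-I_n, O]]` defining the symplectic inner product. -/
def sympOmega (n : ℕ) (K : Type*) [Field K] : Matrix (Fin (2 * n)) (Fin (2 * n)) K :=
  Matrix.of fun i j => if j.1 = i.1 + n then 1 else if i.1 = j.1 + n then -1 else 0

/-- The block diagonal matrix `diag(J₂, …, J₂)` (with `J₂ = [[0,1],[-1,0]]`) of size `N`. -/
def jayBlocks (N : ℕ) (K : Type*) [Field K] : Matrix (Fin N) (Fin N) K :=
  Matrix.of fun i j =>
    if i.1 % 2 = 0 ∧ j.1 = i.1 + 1 then 1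
    else if j.1 % 2 = 0 ∧ i.1 = j.1 + 1 then -1 else 0

namespace SympAux

variable {K : Type*} [Field K] (n : ℕ)

/-- local copy of sympInner -/
def sInner (x y : Fin (2 * n) → K) : K :=
  ∑ i : Fin n,
    (x ⟨i.1, by have := i.2; omega⟩ * y ⟨n + i.1, by have := i.2; omega⟩ -
      x ⟨n + i.1, by have := i.2; omega⟩ * y ⟨i.1, by have := i.2; omega⟩)

/-- the symplectic form as a bilinear form -/
def B : LinearMap.BilinForm K (Fin (2 * n) → K) :=
  LinearMap.mk₂ K (sInner n)
    (fun x x' y => by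
      simp only [sInner, Pi.add_apply]
      rw [← Finset.sum_add_distrib]
      exact Finset.sum_congr rfl fun i _ => by ring)
    (fun c x y => by
      simp only [sInner, Pi.smul_apply, smul_eq_mul]
      rw [Finset.mul_sum]
      exact Finset.sum_congr rfl fun i _ => by ring)
    (fun x y y' => by
      simp only [sInner, Pi.add_apply]
      rw [← Finset.sum_add_distrib]
      exact Finset.sum_congr rfl fun i _ => by ring)
    (fun c x y => by
      simp only [sInner, Pi.smul_apply, smul_eq_mul]
      rw [Finset.mul_sum]
      exact Finset.sum_congr rfl fun i _ => by ring)

lemma B_apply (x y : Fin (2 * n) → K) : B n x y = sInner n x y := rfl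

lemma B_skew (x y : Fin (2 * n) → K) : B n x y = - B n y x := by
  simp only [B_apply, sInner]
  rw [← Finset.sum_neg_distrib]
  exact Finset.sum_congr rfl fun i _ => by ring

lemma B_self (x : Fin (2 * n) → K) : B n x x = 0 := by
  simp only [B_apply, sInner]
  exact Finset.sum_eq_zero fun i _ => by ring

lemma B_refl : (B n (K := K)).IsRefl := by
  intro x y h
  rw [B_skew, h, neg_zero]

def il (i : Fin n) : Fin (2 * n) := ⟨i.1, by have := i.2; omega⟩

def ir (i : Fin n) : Fin (2 * n) := ⟨n + i.1, by have := i.2; omega⟩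

lemma il_val (i : Fin n) : (il n i).1 = i.1 := rfl

lemma ir_val (i : Fin n) : (ir n i).1 = n + i.1 := rfl

lemma sInner_eq (x y : Fin (2 * n) → K) :
    sInner n x y = ∑ i : Fin n, (x (il n i) * y (ir n i) - x (ir n i) * y (il n i)) := rfl

lemma B_nondeg : (B n (K := K)).Nondegenerate := by
  refine (LinearMap.IsRefl.nondegenerate_iff_separatingLeft (B := B n (K := K))
    (fun x y h => B_refl n x y h)).2 ?_
  intro x hx
  funext j
  simp only [Pi.zero_apply]
  rcases lt_or_ge j.1 n with hj | hj
  · set j' : Fin n := ⟨j.1, hj⟩ with hj'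
    have h := hx (fun i => if i = ir n j' then 1 else 0)
    rw [B_apply, sInner_eq, Finset.sum_eq_single j'] at h
    · rw [if_pos rfl, if_neg (by
        intro hc
        have := congrArg Fin.val hc
        rw [il_val, ir_val] at this
        omega), mul_one, mul_zero, sub_zero] at h
      have : il n j' = j := Fin.ext rfl
      rwa [this] at h
    · intro i _ hi
      rw [if_neg (by
        intro hc
        have := congrArg Fin.val hc
        rw [ir_val, ir_val] at this
        exact hi (Fin.ext (by omega))), if_neg (by
        intro hc
        have := congrArg Fin.val hc
        rw [il_val, ir_val] at this
        have := i.2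
        omega), mul_zero, mul_zero, sub_zero]
    · intro h; exact absurd (Finset.mem_univ _) h
  · set j' : Fin n := ⟨j.1 - n, by omega⟩ with hj'
    have h := hx (fun i => if i = il n j' then 1 else 0)
    rw [B_apply, sInner_eq, Finset.sum_eq_single j'] at h
    · rw [if_pos rfl, if_neg (by
        intro hc
        have := congrArg Fin.val hc
        rw [ir_val, il_val] at this
        have := j'.2
        omega), mul_zero, mul_one, zero_sub, neg_eq_zero] at h
      have : ir n j' = j := Fin.ext (by rw [ir_val]; simp only [hj']; omega)
      rwa [this] at h
    · intro i _ hi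
      rw [if_neg (by
        intro hc
        have := congrArg Fin.val hc
        rw [ir_val, il_val] at this
        have := i.2
        omega), if_neg (by
        intro hc
        have := congrArg Fin.val hc
        rw [il_val, il_val] at this
        exact hi (Fin.ext (by omega))), mul_zero, mul_zero, sub_zero]
    · intro h; exact absurd (Finset.mem_univ _) h

/-- the entry pattern of jayBlocks -/
def jpat (i j : ℕ) : K :=
  if i % 2 = 0 ∧ j = i + 1 then 1 else if j % 2 = 0 ∧ i = j + 1 then -1 else 0

/-- symplectic basis existence for subspaces on which the form is nondegenerate -/
lemma symp_basis : ∀ (d : ℕ) (W : Submodule K (Fin (2 * n) → K)),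
    Module.finrank K W = d →
    (∀ x ∈ W, (∀ y ∈ W, B n x y = 0) → x = 0) →
    Even d ∧ ∃ b : Fin d → (Fin (2 * n) → K),
      LinearIndependent K b ∧ Submodule.span K (Set.range b) = W ∧
      ∀ i j : Fin d, B n (b i) (b j) = jpat i.1 j.1 := by
  intro d
  induction d using Nat.strong_induction_on with
  | _ d IH =>
  intro W hrk hnd
  rcases Nat.eq_zero_or_pos d with hd0 | hdpos
  · subst hd0
    have hWbot : W = ⊥ := Submodule.finrank_eq_zero.mp hrk
    refine ⟨Even.zero, Fin.elim0, linearIndependent_empty_type, ?_, fun i => i.elim0⟩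
    rw [Set.range_eq_empty, Submodule.span_empty, hWbot]
  · -- pick e ≠ 0 in W
    have hWne : W ≠ ⊥ := by
      intro hb
      rw [hb, finrank_bot] at hrk
      omega
    obtain ⟨e, heW, he0⟩ := Submodule.exists_mem_ne_zero_of_ne_bot hWne
    have : ¬ ∀ y ∈ W, B n e y = 0 := fun h => he0 (hnd e heW h)
    push_neg at this
    obtain ⟨f0, hf0W, hef0⟩ := this
    set f : Fin (2 * n) → K := (B n e f0)⁻¹ • f0 with hf
    have hfW : f ∈ W := W.smul_mem _ hf0W
    have hef : B n e f = 1 := by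
      rw [hf, _root_.map_smul, smul_eq_mul, inv_mul_cancel₀ hef0]
    clear_value f
    clear hf
    have hfe : B n f e = -1 := by rw [B_skew, hef]
    have hee : B n e e = 0 := B_self n e
    have hff : B n f f = 0 := B_self n f
    -- e, f linearly independent
    have hli2 : LinearIndependent K ![e, f] := by
      rw [LinearIndependent.pair_iff]
      intro s t hst
      have h1 : B n e (s • e + t • f) = 0 := by rw [hst, map_zero]
      rw [map_add, _root_.map_smul, _root_.map_smul, hee, hef, smul_eq_mul, smul_eq_mul, mul_zero, mul_one,
        zero_add] at h1
      have h2 : B n f (s • e + t • f) = 0 := by rw [hst, map_zero]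
      rw [map_add, _root_.map_smul, _root_.map_smul, hfe, hff, smul_eq_mul, smul_eq_mul, mul_zero,
        add_zero, mul_neg_one, neg_eq_zero] at h2
      exact ⟨h2, h1⟩
    set S : Submodule K (Fin (2 * n) → K) := Submodule.span K (Set.range ![e, f]) with hS
    have heS : e ∈ S := Submodule.subset_span ⟨0, rfl⟩
    have hfS : f ∈ S := Submodule.subset_span ⟨1, rfl⟩
    have hSmem : ∀ x ∈ S, ∃ s t : K, x = s • e + t • f := by
      intro x hx
      rw [hS, Submodule.mem_span_range_iff_exists_fun] at hx
      obtain ⟨c, hc⟩ := hx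
      exact ⟨c 0, c 1, by rw [← hc, Fin.sum_univ_two]; rfl⟩
    set W' : Submodule K (Fin (2 * n) → K) :=
      W ⊓ LinearMap.ker (B n e) ⊓ LinearMap.ker (B n f) with hW'
    have hW'sub : ∀ x ∈ W', x ∈ W ∧ B n e x = 0 ∧ B n f x = 0 := by
      intro x hx
      obtain ⟨⟨h1, h2⟩, h3⟩ := hx
      exact ⟨h1, h2, h3⟩
    have hW'mem : ∀ x, x ∈ W → B n e x = 0 → B n f x = 0 → x ∈ W' :=
      fun x h1 h2 h3 => ⟨⟨h1, h2⟩, h3⟩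
    -- disjointness
    have hdisj : S ⊓ W' = ⊥ := by
      rw [eq_bot_iff]
      intro x ⟨hxS, hxW'⟩
      obtain ⟨hxW, hex, hfx⟩ := hW'sub x hxW'
      obtain ⟨s, t, hst⟩ := hSmem x hxS
      have h1 : B n e x = t := by
        rw [hst, map_add, _root_.map_smul, _root_.map_smul, hee, hef, smul_eq_mul, smul_eq_mul]; ring
      have h2 : B n f x = -s := by
        rw [hst, map_add, _root_.map_smul, _root_.map_smul, hfe, hff, smul_eq_mul, smul_eq_mul]; ring
      have ht : t = 0 := by rw [← h1, hex]
      have hs : s = 0 := by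
        have h3 := h2.symm.trans hfx
        exact neg_eq_zero.mp h3
      simp only [Submodule.mem_bot]
      rw [hst, hs, ht, zero_smul, zero_smul, add_zero]
    -- sup
    have hsup : S ⊔ W' = W := by
      apply le_antisymm
      · apply sup_le
        · rw [hS, Submodule.span_le]
          rintro x ⟨i, rfl⟩
          fin_cases i
          · exact heW
          · exact hfW
        · intro x hx; exact (hW'sub x hx).1
      · intro w hw
        set a := B n e w with ha
        set bb := B n f w with hbb
        have hw' : w + bb • e - a • f ∈ W' := by
          apply hW'mem
          · exact W.sub_mem (W.add_mem hw (W.smul_mem _ heW)) (W.smul_mem _ hfW)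
          · rw [map_sub, map_add, _root_.map_smul, _root_.map_smul, hee, hef, smul_eq_mul, smul_eq_mul]
            simp [ha]
          · rw [map_sub, map_add, _root_.map_smul, _root_.map_smul, hfe, hff, smul_eq_mul, smul_eq_mul]
            simp [hbb]
        have hdecomp : w = (a • f - bb • e) + (w + bb • e - a • f) := by abel
        rw [hdecomp]
        exact Submodule.add_mem _
          (Submodule.mem_sup_left (S.sub_mem (S.smul_mem _ hfS) (S.smul_mem _ heS)))
          (Submodule.mem_sup_right hw')
    -- finranks
    have hrkS : Module.finrank K S = 2 := by
      rw [hS, finrank_span_eq_card hli2]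
      simp
    have hrksum := Submodule.finrank_sup_add_finrank_inf_eq S W'
    rw [hsup, hdisj, finrank_bot, add_zero, hrkS, hrk] at hrksum
    have hd2 : 2 ≤ d := by omega
    have hrkW' : Module.finrank K W' = d - 2 := by omega
    -- nondegeneracy on W'
    have hndW' : ∀ x ∈ W', (∀ y ∈ W', B n x y = 0) → x = 0 := by
      intro x hx hxall
      obtain ⟨hxW, hex, hfx⟩ := hW'sub x hx
      apply hnd x hxW
      intro y hy
      rw [← hsup] at hy
      obtain ⟨s, hsS, w', hw'W', rfl⟩ := Submodule.mem_sup.mp hy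
      obtain ⟨c0, c1, rfl⟩ := hSmem s hsS
      rw [map_add, map_add, _root_.map_smul, _root_.map_smul, hxall w' hw'W']
      have hxe : B n x e = 0 := by rw [B_skew, hex, neg_zero]
      have hxf : B n x f = 0 := by rw [B_skew, hfx, neg_zero]
      rw [hxe, hxf, smul_zero, smul_zero, add_zero, add_zero]
    obtain ⟨heven', b', hli', hspan', hpat'⟩ := IH (d - 2) (by omega) W' hrkW' hndW'
    have heven : Even d := by
      have : d = (d - 2) + 2 := by omega
      rw [this]
      exact heven'.add even_two
    refine ⟨heven, ?_⟩
    -- combine bases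
    set eqv : Fin 2 ⊕ Fin (d - 2) ≃ Fin d :=
      finSumFinEquiv.trans (finCongr (by omega)) with heqv
    set b : Fin d → (Fin (2 * n) → K) := (Sum.elim ![e, f] b') ∘ eqv.symm with hb
    have hdisj' : Disjoint (Submodule.span K (Set.range ![e, f]))
        (Submodule.span K (Set.range b')) := by
      rw [hspan', disjoint_iff, ← hS, hdisj]
    have hliS : LinearIndependent K (Sum.elim ![e, f] b') :=
      LinearIndependent.sum_type hli2 hli' hdisj'
    have hlib : LinearIndependent K b := hliS.comp eqv.symm eqv.symm.injective
    have hspanb : Submodule.span K (Set.range b) = W := by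
      rw [hb, Set.range_comp, Set.range_eq_univ.mpr eqv.symm.surjective,
        Set.image_univ, Set.Sum.elim_range, Submodule.span_union, hspan', ← hS, hsup]
    refine ⟨b, hlib, hspanb, ?_⟩
    -- the pattern
    have hval_l : ∀ (i : Fin d) (a : Fin 2), eqv.symm i = Sum.inl a → i.1 = a.1 := by
      intro i a h
      rw [Equiv.symm_apply_eq] at h
      rw [h, heqv]
      simp
    have hval_r : ∀ (i : Fin d) (a : Fin (d - 2)), eqv.symm i = Sum.inr a → i.1 = 2 + a.1 := by
      intro i a h
      rw [Equiv.symm_apply_eq] at h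
      rw [h, heqv]
      simp
    have hb'W' : ∀ a, b' a ∈ W' := by
      intro a
      rw [← hspan']
      exact Submodule.subset_span ⟨a, rfl⟩
    intro i j
    have hbi : b i = Sum.elim ![e, f] b' (eqv.symm i) := rfl
    have hbj : b j = Sum.elim ![e, f] b' (eqv.symm j) := rfl
    rcases hsi : eqv.symm i with a | a <;> rcases hsj : eqv.symm j with c | c
    · -- both in {e, f}
      have hi := hval_l i a hsi
      have hj := hval_l j c hsj
      rw [hbi, hbj, hsi, hsj]
      fin_cases a <;> fin_cases c <;>
        simp only [Sum.elim_inl, Fin.zero_eta, Fin.mk_one, Matrix.cons_val_zero, Matrix.cons_val_one, Matrix.head_cons] <;>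
        simp only [Fin.val_zero, Fin.val_one] at hi hj <;>
        rw [jpat]
      · rw [hee, if_neg (by omega), if_neg (by omega)]
      · rw [hef, if_pos ⟨by omega, by omega⟩]
      · rw [hfe, if_neg (by omega), if_pos ⟨by omega, by omega⟩]
      · rw [hff, if_neg (by omega), if_neg (by omega)]
    · -- e/f vs b'
      have hi := hval_l i a hsi
      have hj := hval_r j c hsj
      rw [hbi, hbj, hsi, hsj]
      obtain ⟨_, h2, h3⟩ := hW'sub _ (hb'W' c)
      have ha2 := a.2
      have hz : Sum.elim ![e, f] b' (Sum.inl a) = ![e,f] a := rfl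
      rw [hz]
      have : B n (![e,f] a) (Sum.elim ![e,f] b' (Sum.inr c)) = 0 := by
        fin_cases a
        · exact h2
        · exact h3
      rw [this, jpat, if_neg (by omega), if_neg (by omega)]
    · -- b' vs e/f
      have hi := hval_r i a hsi
      have hj := hval_l j c hsj
      rw [hbi, hbj, hsi, hsj]
      obtain ⟨_, h2, h3⟩ := hW'sub _ (hb'W' a)
      have hc2 := c.2
      rw [B_skew]
      fin_cases c <;>
        simp only [Fin.zero_eta, Fin.mk_one, Sum.elim_inl, Sum.elim_inr,
          Matrix.cons_val_zero, Matrix.cons_val_one, Matrix.head_cons]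
      · rw [h2, neg_zero, jpat, if_neg (by omega), if_neg (by omega)]
      · rw [h3, neg_zero, jpat, if_neg (by omega), if_neg (by omega)]
    · -- both b'
      have hi := hval_r i a hsi
      have hj := hval_r j c hsj
      rw [hbi, hbj, hsi, hsj]
      have := hpat' a c
      rw [Sum.elim_inr, Sum.elim_inr, this, jpat, jpat]
      split_ifs with h1 h2 h3 h4 h5 h6 h7 h8 <;> first | rfl | omega

end SympAux


namespace SympAux

variable {K : Type*} [Field K] (n : ℕ)

/-- Omega matrix (same as sympOmega below) -/
def Om : Matrix (Fin (2 * n)) (Fin (2 * n)) K :=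
  Matrix.of fun i j => if j.1 = i.1 + n then 1 else if i.1 = j.1 + n then -1 else 0

lemma rowOmega (x y : Fin (2 * n) → K) :
    ∑ b : Fin (2 * n), (∑ a : Fin (2 * n), x a * Om n a b) * y b = sInner n x y := by
  have hinner : ∀ b : Fin (2 * n), (∑ a : Fin (2 * n), x a * Om n a b) =
      if hb : b.1 < n then - x (ir n ⟨b.1, hb⟩) else x (il n ⟨b.1 - n, by have := b.2; omega⟩) := by
    intro b
    split_ifs with hb
    · rw [Finset.sum_eq_single (ir n ⟨b.1, hb⟩)]
      · simp only [Om, Matrix.of_apply]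
        rw [if_neg (by rw [ir_val]; simp only [Fin.val_mk]; omega), if_pos (by rw [ir_val]; simp only [Fin.val_mk]; omega)]
        ring
      · intro a _ ha
        simp only [Om, Matrix.of_apply]
        rw [if_neg (by omega), if_neg (by
          intro hc
          exact ha (Fin.ext (by rw [ir_val]; simp only [Fin.val_mk]; omega)))]
        exact mul_zero _
      · intro h; exact absurd (Finset.mem_univ _) h
    · rw [Finset.sum_eq_single (il n ⟨b.1 - n, by have := b.2; omega⟩)]
      · simp only [Om, Matrix.of_apply]
        rw [if_pos (by rw [il_val]; simp only [Fin.val_mk]; omega)]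
        exact mul_one _
      · intro a _ ha
        simp only [Om, Matrix.of_apply]
        rw [if_neg (by
          intro hc
          exact ha (Fin.ext (by rw [il_val]; simp only [Fin.val_mk]; omega))), if_neg (by
          have := a.2
          omega)]
        exact mul_zero _
      · intro h; exact absurd (Finset.mem_univ _) h
  set esum : Fin n ⊕ Fin n ≃ Fin (2 * n) := finSumFinEquiv.trans (finCongr (two_mul n).symm)
    with hesum
  have hesl : ∀ i : Fin n, esum (Sum.inl i) = il n i := by
    intro i
    apply Fin.ext
    simp [hesum, il]
    all_goals omega
  have hesr : ∀ i : Fin n, esum (Sum.inr i) = ir n i := by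
    intro i
    apply Fin.ext
    simp [hesum, ir]
    all_goals omega
  set g : Fin (2 * n) → K := fun b =>
    (if hb : b.1 < n then - x (ir n ⟨b.1, hb⟩) else x (il n ⟨b.1 - n, by have := b.2; omega⟩)) * y b
    with hg
  have hstep1 : ∑ b : Fin (2 * n), (∑ a : Fin (2 * n), x a * Om n a b) * y b =
      ∑ b : Fin (2 * n), g b :=
    Finset.sum_congr rfl fun b _ => by rw [hinner]
  rw [hstep1]
  rw [← Fintype.sum_equiv esum (fun p => g (esum p)) g (fun p => rfl)]
  rw [Fintype.sum_sum_type]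
  have hl : ∀ i : Fin n, g (esum (Sum.inl i)) = - (x (ir n i) * y (il n i)) := by
    intro i
    rw [hesl, hg]
    simp only []
    rw [dif_pos (show (il n i).1 < n from i.2)]
    have h1 : ir n ⟨(il n i).1, i.2⟩ = ir n i := rfl
    rw [h1]
    ring
  have hr : ∀ i : Fin n, g (esum (Sum.inr i)) = x (il n i) * y (ir n i) := by
    intro i
    rw [hesr, hg]
    simp only []
    rw [dif_neg (show ¬ (ir n i).1 < n by rw [ir_val]; omega)]
    have h1 : il n ⟨(ir n i).1 - n, by have := i.2; rw [ir_val]; omega⟩ = il n i := by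
      apply Fin.ext
      rw [il_val, il_val]
      simp only [ir_val]
      omega
    rw [h1]
  rw [Finset.sum_congr rfl fun i _ => hl i, Finset.sum_congr rfl fun i _ => hr i, sInner_eq,
    ← Finset.sum_add_distrib]
  exact Finset.sum_congr rfl fun i _ => by ring

end SympAux

namespace SympAux

variable {K : Type*} [Field K] (n : ℕ)

lemma main_matrix (k : ℕ) (hk2 : k % 2 = 0) (h : k + (2 * n - k) = 2 * n)
    (bC : Fin k → Fin (2 * n) → K) (bH : Fin (2 * n - k) → Fin (2 * n) → K)
    (hcc : ∀ a c, B n (bC a) (bC c) = jpat a.1 c.1)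
    (hhh : ∀ a c, B n (bH a) (bH c) = jpat a.1 c.1)
    (hch : ∀ a c, B n (bC a) (bH c) = 0)
    (hhc : ∀ a c, B n (bH a) (bC c) = 0) :
    (Matrix.of fun i j => Matrix.fromRows (Matrix.of bC) (Matrix.of bH)
        ((finSumFinEquiv.trans (finCongr h)).symm i) j) * Om n *
      (Matrix.of fun i j => Matrix.fromRows (Matrix.of bC) (Matrix.of bH)
        ((finSumFinEquiv.trans (finCongr h)).symm i) j)ᵀ =
      Matrix.of fun i j : Fin (2 * n) => (jpat i.1 j.1 : K) := by
  set E : Fin k ⊕ Fin (2 * n - k) ≃ Fin (2 * n) := finSumFinEquiv.trans (finCongr h) with hE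
  set M : Matrix (Fin (2 * n)) (Fin (2 * n)) K :=
    Matrix.of fun i j => Matrix.fromRows (Matrix.of bC) (Matrix.of bH) (E.symm i) j with hM
  have hvl : ∀ (i : Fin (2 * n)) (a : Fin k), E.symm i = Sum.inl a → i.1 = a.1 := by
    intro i a hi
    rw [Equiv.symm_apply_eq] at hi
    rw [hi, hE]
    simp
  have hvr : ∀ (i : Fin (2 * n)) (a : Fin (2 * n - k)), E.symm i = Sum.inr a → i.1 = k + a.1 := by
    intro i a hi
    rw [Equiv.symm_apply_eq] at hi
    rw [hi, hE]
    simp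
  ext i j
  rw [Matrix.mul_apply]
  simp only [Matrix.mul_apply, Matrix.transpose_apply, Matrix.of_apply]
  rw [show ∑ b : Fin (2 * n), (∑ a : Fin (2 * n), M i a * Om n a b) * M j b =
      sInner n (fun a => M i a) (fun b => M j b) from rowOmega n _ _]
  have hrow : ∀ (i : Fin (2 * n)), (fun a => M i a) =
      Sum.elim bC bH (E.symm i) := by
    intro i
    funext t
    show Matrix.fromRows (Matrix.of bC) (Matrix.of bH) (E.symm i) t = _
    cases hs : E.symm i with
    | inl a => rfl
    | inr a => rfl
  rw [hrow i, hrow j, ← B_apply]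
  show B n (Sum.elim bC bH (E.symm i)) (Sum.elim bC bH (E.symm j)) = jpat i.1 j.1
  rcases hsi : E.symm i with a | a <;> rcases hsj : E.symm j with c | c
  · have hi := hvl i a hsi
    have hj := hvl j c hsj
    rw [Sum.elim_inl, Sum.elim_inl, hcc, hi, hj]
  · have hi := hvl i a hsi
    have hj := hvr j c hsj
    have ha2 := a.2
    rw [Sum.elim_inl, Sum.elim_inr, hch, jpat, if_neg (by omega), if_neg (by omega)]
  · have hi := hvr i a hsi
    have hj := hvl j c hsj
    have hc2 := c.2
    rw [Sum.elim_inr, Sum.elim_inl, hhc, jpat, if_neg (by omega), if_neg (by omega)]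
  · have hi := hvr i a hsi
    have hj := hvr j c hsj
    rw [Sum.elim_inr, Sum.elim_inr, hhh, jpat, jpat]
    split_ifs <;> first | rfl | omega

end SympAux

/-- If `C` is a symplectic LCD `[2n,k]_q` code, then `k` is even and
there are generator matrices `G` of `C` and `H` of `C^{⊥s}` such that the stacked matrix
`M = (G over H)` satisfies `M Ω_n Mᵀ = diag(J₂, …, J₂)` (`n` blocks). -/
theorem symplecticLCD_generator_matrices
    (q : ℕ) (hq : IsPrimePow q)
    {K : Type*} [Field K] [Fintype K] (hK : Fintype.card K = q)
    (n k : ℕ) (hkn : k ≤ 2 * n)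
    (C : Submodule K (Fin (2 * n) → K)) (hC : Module.finrank K C = k)
    (hLCD : C ⊓ sympDual n C = ⊥) :
    Even k ∧
      ∃ (G : Matrix (Fin k) (Fin (2 * n)) K) (H : Matrix (Fin (2 * n - k)) (Fin (2 * n)) K),
        (LinearIndependent K fun i : Fin k => G i) ∧
        Submodule.span K (Set.range fun i : Fin k => G i) = C ∧
        (LinearIndependent K fun i : Fin (2 * n - k) => H i) ∧
        Submodule.span K (Set.range fun i : Fin (2 * n - k) => H i) = sympDual n C ∧
        ∃ M : Matrix (Fin (2 * n)) (Fin (2 * n)) K,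
          M = (Matrix.of fun i j => Matrix.fromRows G H
              ((finSumFinEquiv.trans (finCongr (by omega : k + (2 * n - k) = 2 * n))).symm i) j) ∧
          M * sympOmega n K * Mᵀ = jayBlocks (2 * n) K := by
  classical
  have hrefl := SympAux.B_refl (K := K) n
  have hndeg := SympAux.B_nondeg (K := K) n
  have hdual_eq : sympDual n C = (SympAux.B n).orthogonal C := by
    ext y
    constructor
    · intro hy
      rw [LinearMap.BilinForm.mem_orthogonal_iff]
      intro x hx
      exact hy x hx
    · intro hy x hx
      exact (LinearMap.BilinForm.mem_orthogonal_iff.mp hy) x hx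
  have hfr : Module.finrank K (Fin (2 * n) → K) = 2 * n := by
    rw [Module.finrank_pi]
    exact Fintype.card_fin _
  have hndC : ∀ x ∈ C, (∀ y ∈ C, SympAux.B n x y = 0) → x = 0 := by
    intro x hx hxy
    have hxd : x ∈ sympDual n C := fun c hc => hrefl x c (hxy c hc)
    have hmem : x ∈ C ⊓ sympDual n C := ⟨hx, hxd⟩
    rw [hLCD] at hmem
    exact hmem
  obtain ⟨hkEven, bC, hliC, hspanC, hpatC⟩ := SympAux.symp_basis n k C hC hndC
  have hrkD : Module.finrank K (sympDual n C) = 2 * n - k := by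
    rw [hdual_eq, LinearMap.BilinForm.finrank_orthogonal hndeg, hfr, hC]
  have hndD : ∀ x ∈ sympDual n C, (∀ y ∈ sympDual n C, SympAux.B n x y = 0) → x = 0 := by
    intro x hx hxy
    have hxo : x ∈ (SympAux.B n).orthogonal ((SympAux.B n).orthogonal C) := by
      rw [LinearMap.BilinForm.mem_orthogonal_iff]
      intro z hz
      exact hrefl x z (hxy z (hdual_eq ▸ hz))
    rw [LinearMap.BilinForm.orthogonal_orthogonal hndeg hrefl] at hxo
    have hmem : x ∈ C ⊓ sympDual n C := ⟨hxo, hx⟩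
    rw [hLCD] at hmem
    exact hmem
  obtain ⟨-, bH, hliH, hspanH, hpatH⟩ :=
    SympAux.symp_basis n (2 * n - k) (sympDual n C) hrkD hndD
  refine ⟨hkEven, Matrix.of bC, Matrix.of bH, hliC, hspanC, hliH, hspanH, _, rfl, ?_⟩
  have hmemC : ∀ a, bC a ∈ C := fun a => hspanC ▸ Submodule.subset_span ⟨a, rfl⟩
  have hmemH : ∀ a, bH a ∈ sympDual n C := fun a => hspanH ▸ Submodule.subset_span ⟨a, rfl⟩
  have hch : ∀ a c, SympAux.B n (bC a) (bH c) = 0 := fun a c => (hmemH c) (bC a) (hmemC a)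
  have hhc : ∀ a c, SympAux.B n (bH a) (bC c) = 0 := fun a c => hrefl _ _ (hch c a)
  have hk2 : k % 2 = 0 := Nat.even_iff.mp hkEven
  exact SympAux.main_matrix n k hk2 (by omega) bC bH hpatC hpatH hch hhc

end
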